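/- With A the upper unitriangular matrix with entries G_{i,j} above the diagonal and B the matrix of the previous statement, the conjugation B·A·Bᵀ equals the upper unitriangular matrix whose (i,j)-entry for i < j is: G_{i+1,j+1} if j < n, and G_{1,i+1} if j = n. In particular, applying the transformation A ↦ B A Bᵀ n times returns the original matrix A. -/

import Mathlib

open Matrix

/-- Upper unitriangular matrix with entries `G j k` above the diagonal. -/
def Amat {R : Type*} [CommRing R] {n : ℕ} (G : Fin n → Fin n → R) :
    Matrix (Fin n) (Fin n) R :=
  fun j k => if j = k then 1 else if (j : ℕ) < k then G j k else 0

/-- The matrix `B` of equation (B...B): first column `(G_{1,2},…,G_{1,n},1)ᵀ`,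
superdiagonal `-1`, zeros elsewhere (0-indexed, size `m+2`). -/
def Bprod {R : Type*} [CommRing R] {m : ℕ} (G : Fin (m + 2) → Fin (m + 2) → R) :
    Matrix (Fin (m + 2)) (Fin (m + 2)) R :=
  fun j l =>
    if (l : ℕ) = 0 then
      (if hj : (j : ℕ) < m + 1 then G 0 ⟨(j : ℕ) + 1, by omega⟩ else 1)
    else if (l : ℕ) = (j : ℕ) + 1 then -1
    else 0

/-- The cyclic shift of the variables `G`: the entry `(j,k)` of the new array
is `G (j+1) (k+1)` if `k < n-1` and `G 0 (j+1)` if `k = n-1`. -/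
def Gshift {R : Type*} [CommRing R] {m : ℕ} (G : Fin (m + 2) → Fin (m + 2) → R) :
    Fin (m + 2) → Fin (m + 2) → R :=
  fun j k =>
    if hj : (j : ℕ) < m + 1 then
      (if hk : (k : ℕ) < m + 1 then G ⟨(j : ℕ) + 1, by omega⟩ ⟨(k : ℕ) + 1, by omega⟩
       else G 0 ⟨(j : ℕ) + 1, by omega⟩)
    else G j k

lemma Bmul {R : Type*} [CommRing R] {m : ℕ} (G : Fin (m+2) → Fin (m+2) → R)
    (M : Matrix (Fin (m+2)) (Fin (m+2)) R) (j p : Fin (m+2)) :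
    (Bprod G * M) j p =
      if hj : (j:ℕ) < m+1 then G 0 ⟨(j:ℕ)+1, by omega⟩ * M 0 p - M ⟨(j:ℕ)+1, by omega⟩ p
      else M 0 p := by
  rw [Matrix.mul_apply]
  split_ifs with hj
  · have hne : (0 : Fin (m+2)) ≠ (⟨(j:ℕ)+1, by omega⟩ : Fin (m+2)) := by
      intro h; exact absurd (congrArg Fin.val h) (by simp)
    have hz : ∀ l : Fin (m+2),
        l ∈ Finset.univ → l ∉ ({0, ⟨(j:ℕ)+1, by omega⟩} : Finset (Fin (m+2))) →
        Bprod G j l * M l p = 0 := by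
      intro l _ hl
      simp only [Finset.mem_insert, Finset.mem_singleton, not_or] at hl
      have h0 : (l:ℕ) ≠ 0 := fun h => hl.1 (Fin.ext h)
      have h1 : (l:ℕ) ≠ (j:ℕ)+1 := fun h => hl.2 (Fin.ext h)
      simp [Bprod, h0, h1]
    rw [← Finset.sum_subset (Finset.subset_univ _) hz, Finset.sum_pair hne]
    simp [Bprod, hj]
    ring
  · have hz : ∀ l : Fin (m+2), l ∈ Finset.univ → l ≠ 0 → Bprod G j l * M l p = 0 := by
      intro l _ hl
      have h0 : (l:ℕ) ≠ 0 := fun h => hl (Fin.ext h)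
      have h1 : (l:ℕ) ≠ (j:ℕ)+1 := by omega
      simp [Bprod, h0, h1]
    rw [Finset.sum_eq_single_of_mem 0 (Finset.mem_univ _) hz]
    simp [Bprod, hj]

lemma mulBt {R : Type*} [CommRing R] {m : ℕ} (G : Fin (m+2) → Fin (m+2) → R)
    (M : Matrix (Fin (m+2)) (Fin (m+2)) R) (j k : Fin (m+2)) :
    (M * (Bprod G)ᵀ) j k =
      if hk : (k:ℕ) < m+1 then G 0 ⟨(k:ℕ)+1, by omega⟩ * M j 0 - M j ⟨(k:ℕ)+1, by omega⟩
      else M j 0 := by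
  have : (M * (Bprod G)ᵀ) j k = (Bprod G * Mᵀ) k j := by
    rw [Matrix.mul_apply, Matrix.mul_apply]
    simp [Matrix.transpose_apply, mul_comm]
  rw [this, Bmul]
  simp [Matrix.transpose_apply]

lemma matrix_part {R : Type*} [CommRing R] {m : ℕ}
    (G : Fin (m + 2) → Fin (m + 2) → R) :
    Bprod G * Amat G * (Bprod G)ᵀ = Amat (Gshift G) := by
  ext j k
  simp only [mulBt, Bmul]
  by_cases hj : (j:ℕ) < m+1 <;> by_cases hk : (k:ℕ) < m+1 <;>
    simp only [hj, hk, dif_pos, dif_neg, not_true, not_false_iff]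
  · -- hj, hk
    have A00 : Amat G 0 0 = (1:R) := by simp [Amat]
    have hA1 : Amat G ⟨(j:ℕ)+1, by omega⟩ 0 = 0 := by
      simp [Amat]
    have hA2 : Amat G 0 ⟨(k:ℕ)+1, by omega⟩ = G 0 ⟨(k:ℕ)+1, by omega⟩ := by
      simp [Amat]
    rw [A00, hA1, hA2]
    ring_nf
    have : Amat (Gshift G) j k = Amat G ⟨(j:ℕ)+1, by omega⟩ ⟨(k:ℕ)+1, by omega⟩ := by
      simp only [Amat, Gshift, Fin.ext_iff, hj, hk, dif_pos]
      split_ifs <;> first | rfl | omega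
    rw [this]; ring
  · -- hj, ¬hk : k = m+1
    have A00 : Amat G 0 0 = (1:R) := by simp [Amat]
    have hA1 : Amat G ⟨(j:ℕ)+1, by omega⟩ 0 = 0 := by
      simp [Amat]
    rw [A00, hA1]
    have hjk : (j:ℕ) < (k:ℕ) := by omega
    have hne : j ≠ k := fun h => by rw [h] at hjk; omega
    simp only [Amat, Gshift, hne, if_neg, hjk, if_pos, dif_pos hj, dif_neg hk]
    simp
  · -- ¬hj, hk : j = m+1
    have A00 : Amat G 0 0 = (1:R) := by simp [Amat]
    have hA2 : Amat G 0 ⟨(k:ℕ)+1, by omega⟩ = G 0 ⟨(k:ℕ)+1, by omega⟩ := by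
      simp [Amat]
    rw [A00, hA2]
    have hne : j ≠ k := fun h => by rw [h] at hj; omega
    have hkj : ¬ (j:ℕ) < (k:ℕ) := by omega
    simp only [Amat, hne, if_neg, hkj]
    simp
  · -- ¬hj, ¬hk : j = k = m+1
    have A00 : Amat G 0 0 = (1:R) := by simp [Amat]
    rw [A00]
    have : j = k := Fin.ext (by omega)
    simp [Amat, this]


def srt {m : ℕ} (p : Fin (m+2) × Fin (m+2)) : Fin (m+2) × Fin (m+2) :=
  if p.1 ≤ p.2 then p else (p.2, p.1)

def fsh {m : ℕ} (p : Fin (m+2) × Fin (m+2)) : Fin (m+2) × Fin (m+2) :=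
  srt (p.1 + 1, p.2 + 1)

lemma val_add_one {m : ℕ} (a : Fin (m+2)) :
    ((a + 1 : Fin (m+2)) : ℕ) = if (a:ℕ) = m+1 then 0 else (a:ℕ) + 1 := by
  rw [Fin.val_add_one]
  congr 1
  simp [Fin.ext_iff, Fin.last]

lemma srt_comm {m : ℕ} (a b : Fin (m+2)) : srt (a, b) = srt (b, a) := by
  unfold srt
  rcases le_total a b with h | h <;> simp only [h, if_pos] <;> split_ifs with h2 <;>
    first | rfl | (rw [le_antisymm h h2])

lemma fsh_srt {m : ℕ} (p : Fin (m+2) × Fin (m+2)) : fsh (srt p) = fsh p := by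
  unfold srt
  split_ifs with h
  · rfl
  · show fsh (p.2, p.1) = fsh (p.1, p.2)
    unfold fsh
    exact srt_comm _ _

lemma fsh_lt {m : ℕ} {j k : Fin (m+2)} (h : (j:ℕ) < (k:ℕ)) :
    ((fsh (j, k)).1 : ℕ) < ((fsh (j, k)).2 : ℕ) := by
  unfold fsh srt
  dsimp only
  have hj := val_add_one j
  have hk := val_add_one k
  have hjm : (j:ℕ) ≠ m+1 := by omega
  rw [if_neg hjm] at hj
  split_ifs with hle
  · rw [Fin.le_def] at hle
    dsimp only
    split_ifs at hk <;> omega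
  · rw [Fin.le_def, not_le] at hle
    dsimp only
    split_ifs at hk <;> omega

lemma step {R : Type*} [CommRing R] {m : ℕ} (G : Fin (m+2) → Fin (m+2) → R)
    {j k : Fin (m+2)} (h : (j:ℕ) < (k:ℕ)) :
    Gshift G j k = G (fsh (j, k)).1 (fsh (j, k)).2 := by
  have hj : (j:ℕ) < m+1 := by omega
  unfold Gshift fsh srt
  dsimp only
  have hj1 := val_add_one j
  have hk1 := val_add_one k
  rw [if_neg (by omega : (j:ℕ) ≠ m+1)] at hj1
  rw [dif_pos hj]
  by_cases hk : (k:ℕ) < m+1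
  · rw [if_neg (by omega : (k:ℕ) ≠ m+1)] at hk1
    rw [dif_pos hk, if_pos (by rw [Fin.le_def]; omega)]
    congr 1 <;> exact (Fin.ext (by simp only [Fin.val_mk]; omega)).symm
  · rw [if_pos (by omega : (k:ℕ) = m+1)] at hk1
    rw [dif_neg hk, if_neg (by rw [Fin.le_def]; omega)]
    congr 1
    · exact (Fin.ext (by simp only [Fin.val_mk, Fin.val_zero]; omega)).symm
    · exact (Fin.ext (by simp only [Fin.val_mk]; omega)).symm

lemma fsh_iter_lt {m : ℕ} (t : ℕ) {j k : Fin (m+2)} (h : (j:ℕ) < (k:ℕ)) :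
    ((fsh^[t] (j, k)).1 : ℕ) < ((fsh^[t] (j, k)).2 : ℕ) := by
  induction t with
  | zero => exact h
  | succ t ih =>
    rw [Function.iterate_succ_apply']
    have := fsh_lt ih
    simpa using this

lemma iter_formula {R : Type*} [CommRing R] {m : ℕ} (t : ℕ)
    (G : Fin (m+2) → Fin (m+2) → R) {j k : Fin (m+2)} (h : (j:ℕ) < (k:ℕ)) :
    (Gshift^[t] G) j k = G (fsh^[t] (j, k)).1 (fsh^[t] (j, k)).2 := by
  induction t generalizing G with
  | zero => rfl
  | succ t ih =>
    rw [Function.iterate_succ_apply, ih (Gshift G), Function.iterate_succ_apply']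
    have hlt := fsh_iter_lt t h
    have := step G hlt
    simpa using this

open Fin.NatCast in
lemma fsh_iter_srt {m : ℕ} (t : ℕ) (j k : Fin (m+2)) (h : j ≤ k) :
    fsh^[t] (j, k) = srt (j + (t : Fin (m+2)), k + (t : Fin (m+2))) := by
  induction t with
  | zero => simp [srt, h]
  | succ t ih =>
    rw [Function.iterate_succ_apply', ih, fsh_srt]
    unfold fsh
    dsimp only
    rw [show ((t+1 : ℕ) : Fin (m+2)) = (t : Fin (m+2)) + 1 from by push_cast; ring]
    congr 1 <;> simp only [add_assoc]

theorem BAB_cyclic {R : Type*} [CommRing R] {m : ℕ}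
    (G : Fin (m + 2) → Fin (m + 2) → R) :
    Bprod G * Amat G * (Bprod G)ᵀ = Amat (Gshift G) ∧
      (∀ j k : Fin (m + 2), (j : ℕ) < (k : ℕ) →
        (Gshift^[m + 2] G) j k = G j k) := by
  refine ⟨matrix_part G, fun j k h => ?_⟩
  rw [iter_formula (m+2) G h, fsh_iter_srt (m+2) j k (Fin.le_def.mpr h.le)]
  open Fin.NatCast in
  have hz : ((m+2 : ℕ) : Fin (m+2)) = 0 := by
    simp [Fin.ext_iff, Fin.val_natCast]
  rw [hz, add_zero, add_zero]
  simp [srt, Fin.le_def.mpr h.le]
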